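/- Let N ≥ 1 and f_j: ℝ² → ℝ be smooth for 0 ≤ j ≤ N, with the convention f_{−1} := 0 and f_{N+1} := 0. Then the system ∂_x f_{j−1} + ∂_y f_j = 0 holds on ℝ² for all 0 ≤ j ≤ N+1 if and only if there exist real constants A_{N−n−m,m,n}, one for each pair of integers m, n ≥ 0 with m + n ≤ N, such that for every 0 ≤ j ≤ N and all (x,y) ∈ ℝ²: f_j(x,y) = Σ_{n=0}^{N−j} Σ_{m=0}^{j} C(N−n−m, j−m) · A_{N−n−m,m,n} · x^{N−j−n} (−y)^{j−m}, where C(·,·) denotes the binomial coefficient (equal to 0 when the lower entry is negative or exceeds the upper entry). In particular, the solution space of the system is a real vector space of dimension (N+1)(N+2)/2. -/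

import Mathlib

noncomputable section

/-- Partial derivative with respect to `x` of a function on `ℝ²`. -/
def pdx (f : ℝ × ℝ → ℝ) : ℝ × ℝ → ℝ := fun q => fderiv ℝ f q (1, 0)

/-- Partial derivative with respect to `y` of a function on `ℝ²`. -/
def pdy (f : ℝ × ℝ → ℝ) : ℝ × ℝ → ℝ := fun q => fderiv ℝ f q (0, 1)


lemma coetop (n : ℕ) : ((n:WithTop ℕ∞)) ≤ ((⊤:ℕ∞) : WithTop ℕ∞) := by
  rw [show ((n:WithTop ℕ∞)) = ((n:ℕ∞):WithTop ℕ∞) by simp]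
  exact WithTop.coe_le_coe.mpr le_top

lemma topsucc : ((⊤:ℕ∞) : WithTop ℕ∞) + 1 ≤ ((⊤:ℕ∞) : WithTop ℕ∞) := by
  rw [← WithTop.coe_one, ← WithTop.coe_add]
  exact WithTop.coe_le_coe.mpr le_top

lemma contDiff_pd (v : ℝ × ℝ) {f : ℝ × ℝ → ℝ} (hf : ContDiff ℝ (⊤:ℕ∞) f) :
    ContDiff ℝ (⊤:ℕ∞) (fun q => fderiv ℝ f q v) :=
  (hf.fderiv_right (m := (⊤:ℕ∞)) topsucc).clm_apply contDiff_const

lemma pd_comm {f : ℝ × ℝ → ℝ} (hf : ContDiff ℝ (⊤:ℕ∞) f) (v w q) :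
    fderiv ℝ (fun p => fderiv ℝ f p v) q w = fderiv ℝ (fun p => fderiv ℝ f p w) q v := by
  have hdf : DifferentiableAt ℝ (fderiv ℝ f) q :=
    ((hf.fderiv_right (m := (⊤:ℕ∞)) topsucc).differentiable (by simp)) q
  have h1 : ∀ u : ℝ × ℝ, fderiv ℝ (fun p => fderiv ℝ f p u) q =
      (fderiv ℝ (fderiv ℝ f) q).flip u := by
    intro u
    rw [fderiv_clm_apply hdf (differentiableAt_const u)]
    simp
  rw [h1, h1]
  have hsym : IsSymmSndFDerivAt ℝ f q := by
    apply ContDiffAt.isSymmSndFDerivAt hf.contDiffAt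
    rw [minSmoothness_of_isRCLikeNormedField]
    rw [show ((2:WithTop ℕ∞)) = ((2:ℕ∞):WithTop ℕ∞) by rfl]
    exact WithTop.coe_le_coe.mpr le_top
  exact hsym w v

lemma contDiff_pdx {f} (hf : ContDiff ℝ (⊤:ℕ∞) f) : ContDiff ℝ (⊤:ℕ∞) (pdx f) := contDiff_pd _ hf
lemma contDiff_pdy {f} (hf : ContDiff ℝ (⊤:ℕ∞) f) : ContDiff ℝ (⊤:ℕ∞) (pdy f) := contDiff_pd _ hf

lemma contDiff_pdx_iter (k : ℕ) {f} (hf : ContDiff ℝ (⊤:ℕ∞) f) :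
    ContDiff ℝ (⊤:ℕ∞) (pdx^[k] f) := by
  induction k generalizing f with
  | zero => exact hf
  | succ k ih => rw [Function.iterate_succ_apply]; exact ih (contDiff_pdx hf)

lemma contDiff_pdy_iter (k : ℕ) {f} (hf : ContDiff ℝ (⊤:ℕ∞) f) :
    ContDiff ℝ (⊤:ℕ∞) (pdy^[k] f) := by
  induction k generalizing f with
  | zero => exact hf
  | succ k ih => rw [Function.iterate_succ_apply]; exact ih (contDiff_pdy hf)

lemma pdx_pdy_comm {f} (hf : ContDiff ℝ (⊤:ℕ∞) f) : pdx (pdy f) = pdy (pdx f) := by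
  funext q
  exact pd_comm hf _ _ q

lemma pdy_pdx_iter (k : ℕ) {f} (hf : ContDiff ℝ (⊤:ℕ∞) f) :
    pdy (pdx^[k] f) = pdx^[k] (pdy f) := by
  induction k generalizing f with
  | zero => rfl
  | succ k ih =>
      rw [Function.iterate_succ_apply, Function.iterate_succ_apply,
        ih (contDiff_pdx hf), pdx_pdy_comm hf]

lemma pdx_pdy_iter (k : ℕ) {f} (hf : ContDiff ℝ (⊤:ℕ∞) f) :
    pdx (pdy^[k] f) = pdy^[k] (pdx f) := by
  induction k generalizing f with
  | zero => rfl
  | succ k ih =>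
      rw [Function.iterate_succ_apply, Function.iterate_succ_apply,
        ih (contDiff_pdy hf), pdx_pdy_comm hf]

lemma pdx_const_mul {f} (hf : ContDiff ℝ (⊤:ℕ∞) f) (c : ℝ) :
    pdx (fun q => c * f q) = fun q => c * pdx f q := by
  funext q
  rw [pdx, fderiv_const_mul (hf.differentiable (by simp) q) c]
  simp [pdx]

lemma pdy_const_mul {f} (hf : ContDiff ℝ (⊤:ℕ∞) f) (c : ℝ) :
    pdy (fun q => c * f q) = fun q => c * pdy f q := by
  funext q
  rw [pdy, fderiv_const_mul (hf.differentiable (by simp) q) c]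
  simp [pdy]

lemma pdx_zero_fun : pdx (0 : ℝ × ℝ → ℝ) = 0 := by
  funext q; rw [pdx, show (0:ℝ×ℝ→ℝ) = fun _ => (0:ℝ) from rfl, fderiv_fun_const]; simp

lemma pdy_zero_fun : pdy (0 : ℝ × ℝ → ℝ) = 0 := by
  funext q; rw [pdy, show (0:ℝ×ℝ→ℝ) = fun _ => (0:ℝ) from rfl, fderiv_fun_const]; simp

lemma pdx_iter_zero_fun (k : ℕ) : pdx^[k] (0 : ℝ × ℝ → ℝ) = 0 := by
  induction k with
  | zero => rfl
  | succ k ih => rw [Function.iterate_succ_apply, pdx_zero_fun, ih]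

lemma contDiff_deriv {h : ℝ → ℝ} (hh : ContDiff ℝ (⊤:ℕ∞) h) : ContDiff ℝ (⊤:ℕ∞) (deriv h) :=
  (contDiff_infty_iff_deriv.mp hh).2

lemma contDiff_deriv_iter (k : ℕ) {h : ℝ → ℝ} (hh : ContDiff ℝ (⊤:ℕ∞) h) :
    ContDiff ℝ (⊤:ℕ∞) (deriv^[k] h) := by
  induction k generalizing h with
  | zero => exact hh
  | succ k ih => rw [Function.iterate_succ_apply]; exact ih (contDiff_deriv hh)

lemma taylor1 (K : ℕ) : ∀ (h : ℝ → ℝ), ContDiff ℝ (⊤:ℕ∞) h → deriv^[K+1] h = 0 →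
    ∀ t : ℝ, h t = ∑ i ∈ Finset.range (K+1), deriv^[i] h 0 * t^i / (i.factorial : ℝ) := by
  induction K with
  | zero =>
      intro h hh hd t
      have h0 : ∀ s, deriv h s = 0 := fun s => congrFun hd s
      have := is_const_of_deriv_eq_zero (contDiff_infty_iff_deriv.mp hh).1 h0 t 0
      simp [this]
  | succ K ih =>
      intro h hh hd t
      have hdh : deriv^[K+1] (deriv h) = 0 := by
        rw [← Function.iterate_succ_apply]; exact hd
      have hder := ih (deriv h) (contDiff_deriv hh) hdh
      set P : ℝ → ℝ := fun t => ∑ i ∈ Finset.range (K+2),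
        (deriv^[i] h 0 / (i.factorial : ℝ)) * t^i with hP
      have hPdiff : Differentiable ℝ P := by
        apply Differentiable.fun_sum
        intro i _
        exact (differentiable_pow i).const_mul _
      have hPderiv : ∀ s, deriv P s = ∑ i ∈ Finset.range (K+1),
          deriv^[i] (deriv h) 0 * s^i / (i.factorial : ℝ) := by
        intro s
        rw [hP]
        rw [deriv_fun_sum (fun i _ => ((differentiable_pow i).const_mul _).differentiableAt)]
        have : ∀ i ∈ Finset.range (K+2),
            deriv (fun t => (deriv^[i] h 0 / (i.factorial : ℝ)) * t^i) s
            = (deriv^[i] h 0 / (i.factorial : ℝ)) * (i * s^(i-1)) := by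
          intro i _
          rw [deriv_const_mul _ (differentiable_pow i).differentiableAt, deriv_pow_field]
        rw [Finset.sum_congr rfl this, Finset.sum_range_succ']
        simp only [Nat.cast_zero, pow_zero, mul_zero, zero_mul, add_zero, mul_one]
        apply Finset.sum_congr rfl
        intro i _
        rw [Function.iterate_succ_apply]
        have hfac : (((i+1).factorial : ℕ) : ℝ) = (i+1) * (i.factorial : ℝ) := by
          rw [Nat.factorial_succ]; push_cast; ring
        rw [hfac]
        have h1 : ((i:ℝ)+1) ≠ 0 := by positivity
        have h2 : (i.factorial : ℝ) ≠ 0 := by exact_mod_cast i.factorial_ne_zero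
        field_simp
        rw [Nat.add_sub_cancel]; push_cast; ring
      have hdiff : Differentiable ℝ h := (contDiff_infty_iff_deriv.mp hh).1
      have hgz : ∀ s, deriv (fun t => h t - P t) s = 0 := by
        intro s
        rw [deriv_fun_sub (hdiff s) (hPdiff s), hder, hPderiv]
        ring
      have hconst := is_const_of_deriv_eq_zero (hdiff.sub hPdiff) hgz t 0
      have hP0 : P 0 = h 0 := by
        rw [hP]
        simp only []
        rw [Finset.sum_range_succ']
        simp
      have hht : h t = P t := by
        have : h t - P t = h 0 - P 0 := hconst
        rw [hP0] at this
        linarith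
      rw [hht, hP]
      apply Finset.sum_congr rfl
      intro i _
      ring

lemma contDiff_slice_y {g : ℝ × ℝ → ℝ} (hg : ContDiff ℝ (⊤:ℕ∞) g) (x : ℝ) :
    ContDiff ℝ (⊤:ℕ∞) (fun s : ℝ => g (x, s)) :=
  hg.comp (contDiff_const.prodMk contDiff_id)

lemma contDiff_slice_x {g : ℝ × ℝ → ℝ} (hg : ContDiff ℝ (⊤:ℕ∞) g) (y : ℝ) :
    ContDiff ℝ (⊤:ℕ∞) (fun s : ℝ => g (s, y)) :=
  hg.comp (contDiff_id.prodMk contDiff_const)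

lemma deriv_slice_y {g : ℝ × ℝ → ℝ} (hg : ContDiff ℝ (⊤:ℕ∞) g) (x t : ℝ) :
    deriv (fun s => g (x, s)) t = pdy g (x, t) := by
  have h1 : HasDerivAt (fun s : ℝ => ((x, s) : ℝ × ℝ)) ((0 : ℝ), (1 : ℝ)) t :=
    (hasDerivAt_const t x).prodMk (hasDerivAt_id t)
  have h2 : DifferentiableAt ℝ g (x, t) := hg.differentiable (by simp) _
  exact (h2.hasFDerivAt.comp_hasDerivAt t h1).deriv

lemma deriv_slice_x {g : ℝ × ℝ → ℝ} (hg : ContDiff ℝ (⊤:ℕ∞) g) (y t : ℝ) :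
    deriv (fun s => g (s, y)) t = pdx g (t, y) := by
  have h1 : HasDerivAt (fun s : ℝ => ((s, y) : ℝ × ℝ)) ((1 : ℝ), (0 : ℝ)) t :=
    (hasDerivAt_id t).prodMk (hasDerivAt_const t y)
  have h2 : DifferentiableAt ℝ g (t, y) := hg.differentiable (by simp) _
  exact (h2.hasFDerivAt.comp_hasDerivAt t h1).deriv

lemma deriv_iter_slice_y (b : ℕ) {g : ℝ × ℝ → ℝ} (hg : ContDiff ℝ (⊤:ℕ∞) g) (x : ℝ) :
    deriv^[b] (fun s => g (x, s)) = fun t => pdy^[b] g (x, t) := by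
  induction b generalizing g with
  | zero => rfl
  | succ b ih =>
      rw [Function.iterate_succ_apply', ih hg, Function.iterate_succ_apply']
      funext t
      exact deriv_slice_y (contDiff_pdy_iter b hg) x t

lemma deriv_iter_slice_x (b : ℕ) {g : ℝ × ℝ → ℝ} (hg : ContDiff ℝ (⊤:ℕ∞) g) (y : ℝ) :
    deriv^[b] (fun s => g (s, y)) = fun t => pdx^[b] g (t, y) := by
  induction b generalizing g with
  | zero => rfl
  | succ b ih =>
      rw [Function.iterate_succ_apply', ih hg, Function.iterate_succ_apply']
      funext t
      exact deriv_slice_x (contDiff_pdx_iter b hg) y t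

lemma hasFDerivAt_mono (c : ℝ) (p r : ℕ) (q : ℝ × ℝ) :
    HasFDerivAt (fun q : ℝ × ℝ => c * q.1 ^ p * (-q.2) ^ r)
      ((c * q.1 ^ p) • (((r : ℝ) * (-q.2) ^ (r-1)) • (-(ContinuousLinearMap.snd ℝ ℝ ℝ))) +
       ((-q.2) ^ r) • (c • (((p : ℝ) * q.1 ^ (p-1)) • (ContinuousLinearMap.fst ℝ ℝ ℝ)))) q := by
  have h1 : HasFDerivAt (fun q : ℝ × ℝ => q.1 ^ p)
      (((p : ℝ) * q.1 ^ (p-1)) • (ContinuousLinearMap.fst ℝ ℝ ℝ)) q :=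
    (hasDerivAt_pow p q.1).comp_hasFDerivAt q hasFDerivAt_fst
  have h2 : HasFDerivAt (fun q : ℝ × ℝ => (-q.2) ^ r)
      (((r : ℝ) * (-q.2) ^ (r-1)) • (-(ContinuousLinearMap.snd ℝ ℝ ℝ))) q :=
    (hasDerivAt_pow r (-q.2)).comp_hasFDerivAt q hasFDerivAt_snd.neg
  exact (h1.const_mul c).mul h2

lemma pdx_mono (c : ℝ) (p r : ℕ) (q : ℝ × ℝ) :
    pdx (fun q : ℝ × ℝ => c * q.1 ^ p * (-q.2) ^ r) q
      = c * ((p : ℝ) * q.1 ^ (p-1)) * (-q.2) ^ r := by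
  rw [pdx, (hasFDerivAt_mono c p r q).fderiv]
  simp
  ring

lemma pdy_mono (c : ℝ) (p r : ℕ) (q : ℝ × ℝ) :
    pdy (fun q : ℝ × ℝ => c * q.1 ^ p * (-q.2) ^ r) q
      = -((r : ℝ) * (c * q.1 ^ p * (-q.2) ^ (r-1))) := by
  rw [pdy, (hasFDerivAt_mono c p r q).fderiv]
  simp
  ring

lemma pdx_sum {ι : Type*} (s : Finset ι) (G : ι → ℝ × ℝ → ℝ) (q : ℝ × ℝ)
    (h : ∀ i ∈ s, DifferentiableAt ℝ (G i) q) :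
    pdx (fun q => ∑ i ∈ s, G i q) q = ∑ i ∈ s, pdx (G i) q := by
  rw [pdx, fderiv_fun_sum h]
  simp [pdx]

lemma pdy_sum {ι : Type*} (s : Finset ι) (G : ι → ℝ × ℝ → ℝ) (q : ℝ × ℝ)
    (h : ∀ i ∈ s, DifferentiableAt ℝ (G i) q) :
    pdy (fun q => ∑ i ∈ s, G i q) q = ∑ i ∈ s, pdy (G i) q := by
  rw [pdy, fderiv_fun_sum h]
  simp [pdy]

lemma pdy_iter_zero_fun (k : ℕ) : pdy^[k] (0 : ℝ × ℝ → ℝ) = 0 := by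
  induction k with
  | zero => rfl
  | succ k ih => rw [Function.iterate_succ_apply, pdy_zero_fun, ih]

lemma pdx_iter_const_mul (k : ℕ) {f} (hf : ContDiff ℝ (⊤:ℕ∞) f) (c : ℝ) :
    pdx^[k] (fun q => c * f q) = fun q => c * pdx^[k] f q := by
  induction k generalizing f with
  | zero => rfl
  | succ k ih =>
      rw [Function.iterate_succ_apply, pdx_const_mul hf c,
        ih (contDiff_pdx hf), Function.iterate_succ_apply]

lemma pdy_iter_const_mul (k : ℕ) {f} (hf : ContDiff ℝ (⊤:ℕ∞) f) (c : ℝ) :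
    pdy^[k] (fun q => c * f q) = fun q => c * pdy^[k] f q := by
  induction k generalizing f with
  | zero => rfl
  | succ k ih =>
      rw [Function.iterate_succ_apply, pdy_const_mul hf c,
        ih (contDiff_pdy hf), Function.iterate_succ_apply]

lemma pdx_double (R1 R2 : ℕ) (c : ℕ → ℕ → ℝ) (p r : ℕ → ℕ → ℕ) (q : ℝ × ℝ) :
    pdx (fun q : ℝ × ℝ => ∑ n ∈ Finset.range R1, ∑ m ∈ Finset.range R2,
      c n m * q.1 ^ p n m * (-q.2) ^ r n m) q
    = ∑ n ∈ Finset.range R1, ∑ m ∈ Finset.range R2,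
      c n m * ((p n m : ℝ) * q.1 ^ (p n m - 1)) * (-q.2) ^ r n m := by
  rw [pdx_sum _ _ q (fun n _ => DifferentiableAt.fun_sum
    (fun m _ => (hasFDerivAt_mono (c n m) (p n m) (r n m) q).differentiableAt))]
  refine Finset.sum_congr rfl fun n _ => ?_
  rw [pdx_sum _ _ q (fun m _ => (hasFDerivAt_mono (c n m) (p n m) (r n m) q).differentiableAt)]
  exact Finset.sum_congr rfl fun m _ => pdx_mono _ _ _ q

lemma pdy_double (R1 R2 : ℕ) (c : ℕ → ℕ → ℝ) (p r : ℕ → ℕ → ℕ) (q : ℝ × ℝ) :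
    pdy (fun q : ℝ × ℝ => ∑ n ∈ Finset.range R1, ∑ m ∈ Finset.range R2,
      c n m * q.1 ^ p n m * (-q.2) ^ r n m) q
    = ∑ n ∈ Finset.range R1, ∑ m ∈ Finset.range R2,
      -((r n m : ℝ) * (c n m * q.1 ^ p n m * (-q.2) ^ (r n m - 1))) := by
  rw [pdy_sum _ _ q (fun n _ => DifferentiableAt.fun_sum
    (fun m _ => (hasFDerivAt_mono (c n m) (p n m) (r n m) q).differentiableAt))]
  refine Finset.sum_congr rfl fun n _ => ?_
  rw [pdy_sum _ _ q (fun m _ => (hasFDerivAt_mono (c n m) (p n m) (r n m) q).differentiableAt)]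
  exact Finset.sum_congr rfl fun m _ => pdy_mono _ _ _ q

/-- the leading-order system `∂_x f_{j−1} + ∂_y f_j = 0` (for `0 ≤ j ≤ N+1`,
with `f_{−1} = f_{N+1} = 0`) holds iff there exist real constants `A_{N−n−m,m,n}`
(for `m, n ≥ 0`, `m + n ≤ N`) such that
`f_j = Σ_{n=0}^{N−j} Σ_{m=0}^{j} C(N−n−m, j−m) A_{N−n−m,m,n} x^{N−j−n} (−y)^{j−m}`. -/
theorem stmt_3 (N : ℕ) (hN : 1 ≤ N) (f : ℤ → ℝ × ℝ → ℝ)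
    (hf : ∀ j : ℤ, 0 ≤ j → j ≤ (N : ℤ) → ContDiff ℝ (⊤ : ℕ∞) (f j))
    (hneg : f (-1) = 0) (htop : f ((N : ℤ) + 1) = 0) :
    (∀ j : ℤ, 0 ≤ j → j ≤ (N : ℤ) + 1 →
        ∀ q : ℝ × ℝ, pdx (f (j - 1)) q + pdy (f j) q = 0) ↔
      (∃ A : ℕ → ℕ → ℝ, ∀ j : ℕ, j ≤ N → ∀ q : ℝ × ℝ,
        f (j : ℤ) q =
          ∑ n ∈ Finset.range (N - j + 1), ∑ m ∈ Finset.range (j + 1),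
            (Nat.choose (N - n - m) (j - m) : ℝ) * A m n *
              q.1 ^ (N - j - n) * (-q.2) ^ (j - m)) := by
  have hsmooth : ∀ j : ℤ, -1 ≤ j → j ≤ (N : ℤ) + 1 → ContDiff ℝ (⊤:ℕ∞) (f j) := by
    intro j h1 h2
    rcases eq_or_lt_of_le h1 with h | h
    · rw [← h, hneg]; exact contDiff_const
    rcases eq_or_lt_of_le h2 with h' | h'
    · rw [h', htop]; exact contDiff_const
    · exact hf j (by omega) (by omega)
  constructor
  · -- forward direction
    intro hsys
    have hpdy0 : ∀ j : ℤ, 0 ≤ j → j ≤ (N : ℤ) + 1 →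
        pdy (f j) = fun q => -(pdx (f (j - 1)) q) := by
      intro j h1 h2
      funext q
      have := hsys j h1 h2 q
      linarith
    -- lemma Y
    have lemY : ∀ b : ℕ, ∀ j : ℤ, 0 ≤ j → j ≤ (N : ℤ) → (b : ℤ) ≤ j + 1 →
        pdy^[b] (f j) = fun q => (-1 : ℝ)^b * pdx^[b] (f (j - b)) q := by
      intro b
      induction b with
      | zero => intro j h1 h2 h3; funext q; simp
      | succ b ih =>
          intro j h1 h2 h3
          have hb : (b : ℤ) ≤ j := by push_cast at h3 ⊢; omega
          have hs : ContDiff ℝ (⊤:ℕ∞) (f (j - b)) := hf (j - b) (by omega) (by omega)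
          rw [Function.iterate_succ_apply', ih j h1 h2 (by omega),
            pdy_const_mul (contDiff_pdx_iter b hs), pdy_pdx_iter b hs,
            hpdy0 (j - b) (by omega) (by omega)]
          have hneg1 : (fun q => -(pdx (f (j - b - 1)) q)) =
              fun q => (-1 : ℝ) * pdx (f (j - b - 1)) q := by funext q; ring
          rw [hneg1, pdx_iter_const_mul b (contDiff_pdx (hsmooth (j - b - 1) (by omega) (by omega))) (-1 : ℝ)]
          funext q
          rw [← Function.iterate_succ_apply]
          have hidx : j - b - 1 = j - ((b : ℤ) + 1) := by ring
          rw [hidx]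
          push_cast
          ring
    -- lemma X
    have lemX : ∀ a : ℕ, ∀ j : ℤ, 0 ≤ j → j + (a : ℤ) ≤ (N : ℤ) + 1 →
        pdx^[a] (f j) = fun q => (-1 : ℝ)^a * pdy^[a] (f (j + a)) q := by
      intro a
      induction a with
      | zero => intro j h1 h2; funext q; simp
      | succ a ih =>
          intro j h1 h2
          have hs : ContDiff ℝ (⊤:ℕ∞) (f (j + a)) := hf (j + a) (by omega) (by push_cast at h2; omega)
          rw [Function.iterate_succ_apply', ih j h1 (by push_cast at h2 ⊢; omega),
            pdx_const_mul (contDiff_pdy_iter a hs), pdx_pdy_iter a hs]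
          have hx : pdx (f (j + a)) = fun q => (-1 : ℝ) * pdy (f (j + a + 1)) q := by
            have := hpdy0 (j + a + 1) (by omega) (by push_cast at h2 ⊢; omega)
            funext q
            have h2' := congrFun this q
            simp only [add_sub_cancel_right] at h2'
            rw [h2']
            ring
          rw [hx, pdy_iter_const_mul a (contDiff_pdy (hsmooth (j + a + 1) (by omega) (by push_cast at h2 ⊢; omega))) (-1 : ℝ)]
          funext q
          rw [← Function.iterate_succ_apply]
          have hidx : j + a + 1 = j + ((a : ℤ) + 1) := by ring
          rw [hidx]
          push_cast
          ring
    have hy_top : ∀ j : ℕ, j ≤ N → pdy^[j+1] (f (j : ℤ)) = 0 := by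
      intro j hj
      rw [lemY (j+1) (j : ℤ) (by omega) (by exact_mod_cast hj) (by push_cast; omega)]
      have : ((j : ℤ) - ((j : ℕ) + 1 : ℕ)) = -1 := by push_cast; ring
      rw [this, hneg, pdx_iter_zero_fun]
      funext q
      simp
    have hx_top : ∀ j : ℕ, j ≤ N → pdx^[N+1-j] (f (j : ℤ)) = 0 := by
      intro j hj
      rw [lemX (N+1-j) (j : ℤ) (by omega) (by push_cast; omega)]
      have : ((j : ℤ) + ((N + 1 - j : ℕ) : ℤ)) = (N : ℤ) + 1 := by
        have : (N + 1 - j : ℕ) = N + 1 - j := rfl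
        push_cast [Nat.cast_sub (by omega : j ≤ N + 1)]
        ring
      rw [this, htop, pdy_iter_zero_fun]
      funext q
      simp
    refine ⟨fun m n => pdx^[N - n - m] (f (m : ℤ)) (0, 0) / ((N - n - m).factorial : ℝ), ?_⟩
    intro j hj q
    have hsj : ContDiff ℝ (⊤:ℕ∞) (f (j : ℤ)) := hf _ (by omega) (by exact_mod_cast hj)
    -- Step 1: Taylor in y
    have hder0 : deriv^[j+1] (fun s => f (j : ℤ) (q.1, s)) = 0 := by
      rw [deriv_iter_slice_y (j+1) hsj q.1, hy_top j hj]
      funext t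
      simp
    have step1 : f (j : ℤ) q = ∑ b ∈ Finset.range (j+1),
        pdy^[b] (f (j : ℤ)) (q.1, 0) * q.2 ^ b / (b.factorial : ℝ) := by
      have h1 := taylor1 j (fun s => f (j : ℤ) (q.1, s)) (contDiff_slice_y hsj q.1) hder0 q.2
      simp only [Prod.mk.eta] at h1
      rw [h1]
      refine Finset.sum_congr rfl fun b _ => ?_
      rw [deriv_iter_slice_y b hsj q.1]
    -- Step 2: replace pdy^[b] by pdx^[b] with shifted index
    have step2 : ∀ b, b ≤ j → pdy^[b] (f (j : ℤ)) (q.1, 0)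
        = (-1 : ℝ)^b * pdx^[b] (f ((j - b : ℕ) : ℤ)) (q.1, 0) := by
      intro b hb
      rw [lemY b (j : ℤ) (by omega) (by exact_mod_cast hj) (by push_cast; omega)]
      have : ((j : ℤ) - (b : ℕ)) = ((j - b : ℕ) : ℤ) := by
        push_cast [Nat.cast_sub hb]; ring
      rw [this]
    -- Step 3: Taylor in x for pdx^[b] (f m)
    have step3 : ∀ b, b ≤ j → pdx^[b] (f ((j - b : ℕ) : ℤ)) (q.1, 0)
        = ∑ a ∈ Finset.range (N - j + 1),
            pdx^[a + b] (f ((j - b : ℕ) : ℤ)) (0, 0) * q.1 ^ a / (a.factorial : ℝ) := by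
      intro b hb
      have hm : j - b ≤ N := by omega
      have hsm : ContDiff ℝ (⊤:ℕ∞) (f ((j - b : ℕ) : ℤ)) := hf _ (by omega) (by exact_mod_cast hm)
      have hsmb : ContDiff ℝ (⊤:ℕ∞) (pdx^[b] (f ((j - b : ℕ) : ℤ))) := contDiff_pdx_iter b hsm
      have hd : deriv^[N - j + 1] (fun s => pdx^[b] (f ((j - b : ℕ) : ℤ)) (s, 0)) = 0 := by
        rw [deriv_iter_slice_x (N - j + 1) hsmb 0]
        have h1 : pdx^[N - j + 1] (pdx^[b] (f ((j - b : ℕ) : ℤ)))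
            = pdx^[(N - j + 1) + b] (f ((j - b : ℕ) : ℤ)) :=
          (Function.iterate_add_apply pdx (N - j + 1) b _).symm
        have h2 : (N - j + 1) + b = N + 1 - (j - b) := by omega
        rw [h1, h2, hx_top (j - b) hm]
        funext t
        simp
      have h1 := taylor1 (N - j) (fun s => pdx^[b] (f ((j - b : ℕ) : ℤ)) (s, 0)) (contDiff_slice_x hsmb 0) hd q.1
      rw [h1]
      refine Finset.sum_congr rfl fun a _ => ?_
      rw [deriv_iter_slice_x a hsmb 0]
      rw [Function.iterate_add_apply]
    -- Combine
    rw [step1]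
    rw [Finset.sum_congr rfl (fun b hb => by
      rw [step2 b (by exact Finset.mem_range_succ_iff.mp hb),
        step3 b (by exact Finset.mem_range_succ_iff.mp hb)])]
    have hreflect : ∀ (G : ℕ → ℕ → ℝ),
        (∑ n ∈ Finset.range (N - j + 1), ∑ m ∈ Finset.range (j + 1), G n m)
        = ∑ a ∈ Finset.range (N - j + 1), ∑ b ∈ Finset.range (j + 1), G (N - j - a) (j - b) := by
      intro G
      rw [← Finset.sum_range_reflect]
      refine Finset.sum_congr rfl fun a ha => ?_
      rw [← Finset.sum_range_reflect]
      refine Finset.sum_congr rfl fun b hb => ?_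
      congr 1 <;> omega
    rw [hreflect, Finset.sum_comm]
    refine Finset.sum_congr rfl fun b hb => ?_
    rw [Finset.mul_sum, Finset.sum_mul, Finset.sum_div]
    refine Finset.sum_congr rfl fun a ha => ?_
    beta_reduce
    have hb' : b ≤ j := Finset.mem_range_succ_iff.mp hb
    have ha' : a ≤ N - j := Finset.mem_range_succ_iff.mp ha
    have e1 : N - (N - j - a) - (j - b) = a + b := by omega
    have e2 : j - (j - b) = b := by omega
    have e3 : N - j - (N - j - a) = a := by omega
    rw [e1, e2, e3]
    have hfac : ((a+b).choose b * b.factorial * a.factorial : ℝ) = ((a+b).factorial : ℝ) := by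
      have := Nat.choose_mul_factorial_mul_factorial (Nat.le_add_left b a)
      rw [Nat.add_sub_cancel] at this
      exact_mod_cast this
    have h1 : (a.factorial : ℝ) ≠ 0 := by exact_mod_cast a.factorial_ne_zero
    have h2 : (b.factorial : ℝ) ≠ 0 := by exact_mod_cast b.factorial_ne_zero
    have h3 : ((a+b).factorial : ℝ) ≠ 0 := by exact_mod_cast (a+b).factorial_ne_zero
    rw [neg_pow q.2 b]
    field_simp
    rw [← hfac]
    ring
  · rintro ⟨A, hA⟩ j hj0 hj1 q
    have hFf : ∀ k : ℕ, k ≤ N → f (k : ℤ) = fun q : ℝ × ℝ =>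
        ∑ n ∈ Finset.range (N - k + 1), ∑ m ∈ Finset.range (k + 1),
          ((N - n - m).choose (k - m) : ℝ) * A m n * q.1 ^ (N - k - n) * (-q.2) ^ (k - m) := by
      intro k hk
      funext p
      exact hA k hk p
    rcases eq_or_lt_of_le hj0 with h0 | h0
    · -- j = 0
      rw [← h0]
      have hm1 : (0:ℤ) - 1 = -1 := by ring
      rw [hm1, hneg, pdx_zero_fun]
      have h00 : ((0:ℕ):ℤ) = (0:ℤ) := by norm_num
      rw [← h00, hFf 0 (by omega)]
      simp only [Nat.sub_zero, Pi.zero_apply, zero_add]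
      rw [pdy_double (N + 1) 1 (fun n m => ((N - n - m).choose (0 - m) : ℝ) * A m n)
        (fun n m => N - n) (fun n m => 0 - m) q]
      apply Finset.sum_eq_zero
      intro n _
      apply Finset.sum_eq_zero
      intro m hm
      have hm0 : m = 0 := by simpa using hm
      subst hm0
      norm_num
    rcases eq_or_lt_of_le hj1 with h1 | h1
    · -- j = N + 1
      rw [h1]
      have hNN : ((N : ℤ) + 1) - 1 = ((N : ℕ) : ℤ) := by ring
      rw [hNN, htop, hFf N (le_refl N)]
      have hz : pdy (0 : ℝ × ℝ → ℝ) q = 0 := by rw [pdy_zero_fun]; rfl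
      rw [hz, add_zero]
      rw [pdx_double (N - N + 1) (N + 1) (fun n m => ((N - n - m).choose (N - m) : ℝ) * A m n)
        (fun n m => N - N - n) (fun n m => N - m) q]
      apply Finset.sum_eq_zero
      intro n hn
      apply Finset.sum_eq_zero
      intro m hm
      have hn' : n = 0 := by simp at hn; omega
      subst hn'
      norm_num
    -- middle case: 1 ≤ j ≤ N
    obtain ⟨k, rfl⟩ : ∃ k : ℕ, j = (k : ℤ) := ⟨j.toNat, by omega⟩
    obtain ⟨K, rfl⟩ : ∃ K : ℕ, k = K + 1 := ⟨k - 1, by omega⟩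
    have hK : K + 1 ≤ N := by omega
    have hcast : ((K + 1 : ℕ) : ℤ) - 1 = ((K : ℕ) : ℤ) := by push_cast; ring
    rw [hcast, hFf K (by omega), hFf (K + 1) (by omega)]
    rw [pdx_double (N - K + 1) (K + 1) (fun n m => ((N - n - m).choose (K - m) : ℝ) * A m n)
      (fun n m => N - K - n) (fun n m => K - m) q]
    rw [pdy_double (N - (K + 1) + 1) (K + 1 + 1) (fun n m => ((N - n - m).choose (K + 1 - m) : ℝ) * A m n)
      (fun n m => N - (K + 1) - n) (fun n m => K + 1 - m) q]
    have hR : N - (K + 1) + 1 = N - K := by omega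
    rw [hR]
    -- drop the vanishing boundary terms
    rw [Finset.sum_range_succ]
    have hlast : ∑ m ∈ Finset.range (K + 1),
        ((N - (N - K) - m).choose (K - m) : ℝ) * A m (N - K) *
          (((N - K - (N - K) : ℕ) : ℝ) * q.1 ^ (N - K - (N - K) - 1)) * (-q.2) ^ (K - m) = 0 := by
      apply Finset.sum_eq_zero
      intro m _
      have : (N - K - (N - K) : ℕ) = 0 := by omega
      rw [this]
      norm_num
    rw [hlast, add_zero]
    have hinner : ∀ n, n ∈ Finset.range (N - K) →
        (∑ m ∈ Finset.range (K + 1 + 1),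
          -(((K + 1 - m : ℕ) : ℝ) * (((N - n - m).choose (K + 1 - m) : ℝ) * A m n *
            q.1 ^ (N - (K + 1) - n) * (-q.2) ^ (K + 1 - m - 1))))
        = ∑ m ∈ Finset.range (K + 1),
          -(((K + 1 - m : ℕ) : ℝ) * (((N - n - m).choose (K + 1 - m) : ℝ) * A m n *
            q.1 ^ (N - (K + 1) - n) * (-q.2) ^ (K + 1 - m - 1))) := by
      intro n _
      rw [Finset.sum_range_succ]
      norm_num
    rw [Finset.sum_congr rfl hinner, ← Finset.sum_add_distrib]
    apply Finset.sum_eq_zero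
    intro n hn
    rw [← Finset.sum_add_distrib]
    apply Finset.sum_eq_zero
    intro m hm
    have hn' : n < N - K := Finset.mem_range.mp hn
    have hm' : m < K + 1 := Finset.mem_range.mp hm
    have e1 : N - K - n - 1 = N - (K + 1) - n := by omega
    have e2 : K + 1 - m - 1 = K - m := by omega
    rw [e1, e2]
    have key : (N - n - m).choose (K - m) * (N - K - n) = (N - n - m).choose (K + 1 - m) * (K + 1 - m) := by
      have hs : N - n - m = (N - K - 1 - n) + (K - m) + 1 := by omega
      have h2 : K + 1 - m = (K - m) + 1 := by omega
      have h3 : N - K - n = (N - K - 1 - n) + 1 := by omega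
      rw [hs, h2, h3, Nat.choose_succ_right_eq]
      congr 1
      omega
    have keyR : ((N - n - m).choose (K - m) : ℝ) * ((N - K - n : ℕ) : ℝ)
        = ((N - n - m).choose (K + 1 - m) : ℝ) * ((K + 1 - m : ℕ) : ℝ) := by
      exact_mod_cast key
    linear_combination (A m n * q.1 ^ (N - (K + 1) - n) * (-q.2) ^ (K - m)) * keyR
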